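/- (Kernel grid-average approximation, used in the proof of Theorem 1; case q = 1.) Let K be a probability density on ℝ, symmetric about 0, with bounded derivative, finite total variation, ∫x²K(x)dx < ∞, and ∫_y^∞ K(x)dx ≤ M e^{−ay²} for some M, a > 0 and all sufficiently large y. Let w_j = (2j−1)/(2m), j = 1,…,m, be the evenly spaced grid on [0,1]. Then for every δ ∈ (0, 1/2) there exist constants C > 0, a' > 0 and h₀ > 0 such that for all h ∈ (0, h₀) and all m ≥ 1, sup_{x ∈ [δ, 1−δ]} | m^{−1}Σ_{j=1}^m h^{−1}K(h^{−1}(x − w_j)) − 1 | ≤ C(h^{−1}m^{−1} + e^{−a'/h²}). -/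

import Mathlib

open MeasureTheory Set

noncomputable section

namespace AHM

lemma sum_evar (g : ℝ → ℝ) (a : ℕ → ℝ) (hmono : Monotone a) (n : ℕ) :
    ∑ j ∈ Finset.range n, eVariationOn g (Icc (a j) (a (j+1)))
      = eVariationOn g (Icc (a 0) (a n)) := by
  induction n with
  | zero =>
    rw [Finset.sum_range_zero, Icc_self]
    exact (eVariationOn.subsingleton g subsingleton_singleton).symm
  | succ n ih =>
    have h := eVariationOn.Icc_add_Icc g (s := univ)
      (hmono (Nat.zero_le n)) (hmono (Nat.le_succ n)) (mem_univ (a n))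
    simp only [univ_inter] at h
    rw [Finset.sum_range_succ, ih, h]

lemma midpoint_bound (g : ℝ → ℝ) (hg : Continuous g)
    (hbv : eVariationOn g univ ≠ ⊤) (m : ℕ) (hm : 1 ≤ m) :
    |(∑ j ∈ Finset.range m, (m:ℝ)⁻¹ * g ((2*(j:ℝ)+1)/(2*m))) - ∫ w in (0:ℝ)..1, g w|
      ≤ (m:ℝ)⁻¹ * (eVariationOn g univ).toReal := by
  have hm0 : (0:ℝ) < m := by exact_mod_cast hm
  set a : ℕ → ℝ := fun j => j / m with ha
  have hamono : Monotone a := by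
    intro i j hij
    have hij' : (i:ℝ) ≤ j := by exact_mod_cast hij
    simp only [ha]
    gcongr
  have hsplit : ∫ w in (0:ℝ)..1, g w
      = ∑ j ∈ Finset.range m, ∫ w in (a j)..(a (j+1)), g w := by
    rw [intervalIntegral.sum_integral_adjacent_intervals
      (fun k _ => (hg.intervalIntegrable _ _))]
    simp only [ha]
    norm_num
    rw [div_self hm0.ne']
  set V : ℕ → ENNReal := fun j => eVariationOn g (Icc (a j) (a (j+1))) with hV
  have hVle : ∀ j, V j ≤ eVariationOn g univ :=
    fun j => eVariationOn.mono g (subset_univ _)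
  have hVtop : ∀ j, V j ≠ ⊤ := fun j => ((hVle j).trans_lt (lt_top_iff_ne_top.mpr hbv)).ne
  -- per-term bound
  have key : ∀ j ∈ Finset.range m,
      |(m:ℝ)⁻¹ * g ((2*(j:ℝ)+1)/(2*m)) - ∫ w in (a j)..(a (j+1)), g w|
        ≤ (V j).toReal * (m:ℝ)⁻¹ := by
    intro j _
    set c : ℝ := (2*(j:ℝ)+1)/(2*m) with hc
    have h1 : a j ≤ c := by
      rw [ha, hc, div_le_div_iff₀ hm0 (by positivity)]
      push_cast; nlinarith
    have h2 : c ≤ a (j+1) := by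
      rw [ha, hc, div_le_div_iff₀ (by positivity) hm0]
      push_cast; nlinarith
    have hlen : a (j+1) - a j = (m:ℝ)⁻¹ := by
      simp only [ha]; push_cast; field_simp; ring
    have hcmem : c ∈ Icc (a j) (a (j+1)) := ⟨h1, h2⟩
    have hbnd : ∀ w ∈ Set.uIoc (a j) (a (j+1)), ‖g c - g w‖ ≤ (V j).toReal := by
      intro w hw
      have hw' : w ∈ Icc (a j) (a (j+1)) := by
        rw [Set.uIoc_of_le (h1.trans h2)] at hw
        exact ⟨hw.1.le, hw.2⟩
      have e := eVariationOn.edist_le g hcmem hw'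
      have : dist (g c) (g w) ≤ (V j).toReal := by
        rw [dist_edist]
        exact ENNReal.toReal_mono (hVtop j) e
      simpa [Real.dist_eq] using this
    have hconst : (m:ℝ)⁻¹ * g c = ∫ _ in (a j)..(a (j+1)), g c := by
      rw [intervalIntegral.integral_const, smul_eq_mul, hlen]
    rw [hconst, ← intervalIntegral.integral_sub (by exact intervalIntegrable_const)
      (hg.intervalIntegrable _ _)]
    calc |∫ w in (a j)..(a (j+1)), (g c - g w)|
        ≤ (V j).toReal * |a (j+1) - a j| :=
          intervalIntegral.norm_integral_le_of_norm_le_const hbnd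
      _ = (V j).toReal * (m:ℝ)⁻¹ := by rw [hlen, abs_of_nonneg (by positivity)]
  calc |(∑ j ∈ Finset.range m, (m:ℝ)⁻¹ * g ((2*(j:ℝ)+1)/(2*m))) - ∫ w in (0:ℝ)..1, g w|
      = |∑ j ∈ Finset.range m,
          ((m:ℝ)⁻¹ * g ((2*(j:ℝ)+1)/(2*m)) - ∫ w in (a j)..(a (j+1)), g w)| := by
        rw [hsplit, Finset.sum_sub_distrib]
    _ ≤ ∑ j ∈ Finset.range m,
          |(m:ℝ)⁻¹ * g ((2*(j:ℝ)+1)/(2*m)) - ∫ w in (a j)..(a (j+1)), g w| :=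
        Finset.abs_sum_le_sum_abs _ _
    _ ≤ ∑ j ∈ Finset.range m, (V j).toReal * (m:ℝ)⁻¹ := Finset.sum_le_sum key
    _ = (∑ j ∈ Finset.range m, (V j).toReal) * (m:ℝ)⁻¹ := by rw [Finset.sum_mul]
    _ ≤ (eVariationOn g univ).toReal * (m:ℝ)⁻¹ := by
        gcongr
        rw [← ENNReal.toReal_sum (fun j _ => hVtop j)]
        refine ENNReal.toReal_mono hbv ?_
        rw [hV, sum_evar g a hamono m]
        exact eVariationOn.mono g (subset_univ _)
    _ = (m:ℝ)⁻¹ * (eVariationOn g univ).toReal := mul_comm _ _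



/-- kernel grid-average approximation, `q = 1`.  For a symmetric kernel
density `K` with bounded derivative, finite total variation, finite second moment and
Gaussian tails, and for the evenly spaced grid `w_j = (2j−1)/(2m)` on `[0,1]`, the grid
average of kernel weights is uniformly `1 + O(h⁻¹m⁻¹ + e^{−a'/h²})` on `[δ, 1−δ]`. -/
theorem statement10 (K : ℝ → ℝ)
    (hK0 : ∀ x, 0 ≤ K x) (hKint : Integrable K) (hK1 : (∫ x, K x) = 1)
    (hKsymm : ∀ x, K (-x) = K x)
    (hKdiff : Differentiable ℝ K) (hKderiv : ∃ L, ∀ x, |deriv K x| ≤ L)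
    (hKbv : BoundedVariationOn K univ)
    (hKm2 : Integrable (fun x => x ^ 2 * K x))
    (hKtail : ∃ M a y₀ : ℝ, 0 < M ∧ 0 < a ∧
      ∀ y : ℝ, y₀ ≤ y → (∫ x in Ioi y, K x) ≤ M * Real.exp (-a * y ^ 2)) :
    ∀ δ ∈ Ioo (0:ℝ) (1/2),
      ∃ C a' h₀ : ℝ, 0 < C ∧ 0 < a' ∧ 0 < h₀ ∧
        ∀ h ∈ Ioo (0:ℝ) h₀, ∀ m : ℕ, 1 ≤ m → ∀ x ∈ Icc δ (1 - δ),
          |(m : ℝ)⁻¹ * (∑ j ∈ Finset.range m,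
              K ((x - (2 * (j : ℝ) + 1) / (2 * m)) / h) / h) - 1|
            ≤ C * (h⁻¹ * (m : ℝ)⁻¹ + Real.exp (-a' / h ^ 2)) := by
  obtain ⟨M, a, y₀, hM, ha, htail⟩ := hKtail
  intro δ hδ
  set V : ℝ := (eVariationOn K univ).toReal with hVdef
  have hV0 : 0 ≤ V := ENNReal.toReal_nonneg
  refine ⟨V + 2*M + 1, a * δ^2, δ / (|y₀| + 1), by linarith,
    mul_pos ha (pow_pos hδ.1 2), div_pos hδ.1 (by positivity), ?_⟩
  intro h hh m hm x hx
  have hh0 : 0 < h := hh.1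
  have hm0 : (0:ℝ) < m := by exact_mod_cast hm
  have hδ0 : 0 < δ := hδ.1
  -- δ/h exceeds y₀
  have hdh : y₀ < δ / h := by
    have h1 : h < δ / (|y₀| + 1) := hh.2
    have h2 : |y₀| + 1 < δ / h := by
      rw [lt_div_iff₀ hh0]
      calc (|y₀| + 1) * h < (|y₀| + 1) * (δ / (|y₀| + 1)) := by
            exact mul_lt_mul_of_pos_left h1 (by positivity)
        _ = δ := by field_simp
    calc y₀ ≤ |y₀| := le_abs_self _
      _ < δ / h := by linarith
  -- the kernel shifted function
  set g : ℝ → ℝ := fun w => K ((x - w)/h) with hg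
  have hgc : Continuous g := hKdiff.continuous.comp (by fun_prop)
  have hgbv : eVariationOn g univ ≤ eVariationOn K univ := by
    have hanti : AntitoneOn (fun w : ℝ => (x - w)/h) univ := by
      intro u _ v _ huv
      dsimp only
      gcongr
    exact eVariationOn.comp_le_of_antitoneOn K _ hanti (mapsTo_univ _ _)
  have hgtop : eVariationOn g univ ≠ ⊤ :=
    (hgbv.trans_lt (lt_top_iff_ne_top.mpr hKbv)).ne
  have hmid := midpoint_bound g hgc hgtop m hm
  have hmid' : |(∑ j ∈ Finset.range m, (m:ℝ)⁻¹ * g ((2*(j:ℝ)+1)/(2*m))) -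
      ∫ w in (0:ℝ)..1, g w| ≤ (m:ℝ)⁻¹ * V :=
    hmid.trans (by gcongr; exact ENNReal.toReal_mono hKbv hgbv)
  -- integral computation
  set b1 : ℝ := (x - 1)/h with hb1
  set b2 : ℝ := x/h with hb2
  have hint_eq : ∫ w in (0:ℝ)..1, g w = h * ∫ u in b1..b2, K u := by
    have e1 : ∫ w in (0:ℝ)..1, g w = ∫ u in (x-1)..(x-0), K (u/h) :=
      intervalIntegral.integral_comp_sub_left (fun u => K (u/h)) x
    rw [e1, sub_zero, intervalIntegral.integral_comp_div K hh0.ne', smul_eq_mul]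
  -- tail bounds
  have hIoi_nonneg : ∀ y : ℝ, 0 ≤ ∫ t in Ioi y, K t :=
    fun y => setIntegral_nonneg measurableSet_Ioi (fun t _ => hK0 t)
  have hIoi_le : ∀ y : ℝ, δ / h ≤ y → (∫ t in Ioi y, K t)
      ≤ M * Real.exp (-(a * δ^2) / h^2) := by
    intro y hy
    have hy0 : 0 < y := lt_of_lt_of_le (by positivity) hy
    refine (htail y (le_of_lt (lt_of_lt_of_le hdh hy))).trans ?_
    have hexp : -a * y^2 ≤ -(a * δ^2) / h^2 := by
      have h1 : (δ/h)^2 ≤ y^2 := by nlinarith [div_pos hδ0 hh0]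
      have h2 : -(a * δ^2) / h^2 = -a * (δ/h)^2 := by
        rw [div_pow]; field_simp
      rw [h2]; nlinarith
    exact mul_le_mul_of_nonneg_left (Real.exp_le_exp.mpr hexp) hM.le
  have hb12 : b1 ≤ b2 := by
    rw [hb1, hb2]; gcongr; linarith
  have hleft : (∫ t in Iic b1, K t) = ∫ t in Ioi ((1-x)/h), K t := by
    have e1 : (∫ t in Iic b1, K t) = ∫ t in Iic b1, K (-t) := by
      simp only [hKsymm]
    rw [e1, integral_comp_neg_Iic]
    congr 1
    rw [hb1]; ring
  have hIdecomp : (∫ u in b1..b2, K u) - 1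
      = -((∫ t in Ioi b2, K t) + ∫ t in Ioi ((1-x)/h), K t) := by
    have e1 := intervalIntegral.integral_Iic_sub_Iic (μ := volume) (f := K)
      (hKint.integrableOn) (hKint.integrableOn) (a := b1) (b := b2)
    have e2 := intervalIntegral.integral_Iic_add_Ioi (μ := volume) (f := K) (b := b2)
      (hKint.integrableOn) (hKint.integrableOn)
    rw [← hleft, ← e1]
    rw [← hK1, ← e2]
    ring
  have htb2 : (∫ t in Ioi b2, K t) ≤ M * Real.exp (-(a * δ^2) / h^2) := by
    apply hIoi_le
    rw [hb2]; gcongr; exact hx.1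
  have htb1 : (∫ t in Ioi ((1-x)/h), K t) ≤ M * Real.exp (-(a * δ^2) / h^2) := by
    apply hIoi_le
    gcongr; linarith [hx.2]
  have hIone : |(∫ u in b1..b2, K u) - 1| ≤ 2 * M * Real.exp (-(a * δ^2) / h^2) := by
    rw [hIdecomp, abs_neg, abs_of_nonneg (add_nonneg (hIoi_nonneg b2) (hIoi_nonneg ((1-x)/h)))]
    linarith [htb1, htb2]
  -- rearrange sum
  have hS : (m : ℝ)⁻¹ * (∑ j ∈ Finset.range m,
      K ((x - (2 * (j : ℝ) + 1) / (2 * m)) / h) / h)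
      = h⁻¹ * (∑ j ∈ Finset.range m, (m:ℝ)⁻¹ * g ((2*(j:ℝ)+1)/(2*m))) := by
    rw [Finset.mul_sum, Finset.mul_sum]
    refine Finset.sum_congr rfl fun j _ => ?_
    simp only [hg]
    ring
  rw [hS]
  have hinv : h⁻¹ * ∫ w in (0:ℝ)..1, g w = ∫ u in b1..b2, K u := by
    rw [hint_eq]; field_simp
  have hfinal : h⁻¹ * (∑ j ∈ Finset.range m, (m:ℝ)⁻¹ * g ((2*(j:ℝ)+1)/(2*m))) - 1
      = h⁻¹ * ((∑ j ∈ Finset.range m, (m:ℝ)⁻¹ * g ((2*(j:ℝ)+1)/(2*m)))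
          - ∫ w in (0:ℝ)..1, g w) + ((∫ u in b1..b2, K u) - 1) := by
    rw [mul_sub, hinv]; ring
  rw [hfinal]
  have e1 : |h⁻¹ * ((∑ j ∈ Finset.range m, (m:ℝ)⁻¹ * g ((2*(j:ℝ)+1)/(2*m)))
      - ∫ w in (0:ℝ)..1, g w)| ≤ h⁻¹ * ((m:ℝ)⁻¹ * V) := by
    rw [abs_mul, abs_of_nonneg (by positivity : (0:ℝ) ≤ h⁻¹)]
    exact mul_le_mul_of_nonneg_left hmid' (by positivity)
  calc |h⁻¹ * ((∑ j ∈ Finset.range m, (m:ℝ)⁻¹ * g ((2*(j:ℝ)+1)/(2*m)))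
          - ∫ w in (0:ℝ)..1, g w) + ((∫ u in b1..b2, K u) - 1)|
      ≤ |h⁻¹ * ((∑ j ∈ Finset.range m, (m:ℝ)⁻¹ * g ((2*(j:ℝ)+1)/(2*m)))
          - ∫ w in (0:ℝ)..1, g w)| + |(∫ u in b1..b2, K u) - 1| := abs_add_le _ _
    _ ≤ h⁻¹ * ((m:ℝ)⁻¹ * V) + 2 * M * Real.exp (-(a * δ^2) / h^2) :=
        add_le_add e1 hIone
    _ ≤ (V + 2*M + 1) * (h⁻¹ * (m : ℝ)⁻¹ + Real.exp (-(a * δ^2) / h ^ 2)) := by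
        have hA : 0 < h⁻¹ * (m:ℝ)⁻¹ := by positivity
        have hB : 0 < Real.exp (-(a * δ^2) / h^2) := Real.exp_pos _
        nlinarith
  -- final: -(a*δ^2)/h^2 vs -(a*δ^2)/h^2 : same


end AHM
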